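/- Let (Q,Z) be a locally gentle pair, v a relational vertex, and p = a_1...a_n a path in Q with each consecutive pair a_i a_{i+1} ∉ Z. Then the corresponding sequence of arrows a_1^v, ..., a_n^v in the levee Q^v forms a path in Q^v (i.e. t(a_i^v) = h(a_{i+1}^v) for all i < n). Conversely, every path in Q^v arises this way from a path in Q avoiding the relations broken at v. -/

import Mathlib

attribute [local instance] Classical.propDecidable

/-- A quiver: vertices, arrows, head and tail maps. -/
structure Quiv where
  V : Type
  A : Type
  h : A → V
  t : A → V

/-- A (possibly empty) list of arrows is a path when consecutive arrows compose:
`t aᵢ = h aᵢ₊₁` (paths are written right-to-left as in the paper). -/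
def Quiv.IsPath (Q : Quiv) (p : List Q.A) : Prop :=
  p.Chain' (fun x y => Q.t x = Q.h y)

/-- A locally gentle pair `(Q,Z)`: `Z` is a set of length-2 paths (pairs `(b,a)` with
`t b = h a`), every vertex is head (resp. tail) of at most two arrows, and each arrow
extends in at most one way inside `Z` and at most one way outside `Z` on each side. -/
structure LocallyGentle (Q : Quiv) (Z : Set (Q.A × Q.A)) : Prop where
  comp : ∀ p ∈ Z, Q.t p.1 = Q.h p.2
  head_two : ∀ (v : Q.V) (a b c : Q.A),
    Q.h a = v → Q.h b = v → Q.h c = v → a = b ∨ a = c ∨ b = c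
  tail_two : ∀ (v : Q.V) (a b c : Q.A),
    Q.t a = v → Q.t b = v → Q.t c = v → a = b ∨ a = c ∨ b = c
  rel_right : ∀ b a a' : Q.A, (b, a) ∈ Z → (b, a') ∈ Z → a = a'
  adm_right : ∀ b a a' : Q.A, Q.t b = Q.h a → Q.t b = Q.h a' →
    (b, a) ∉ Z → (b, a') ∉ Z → a = a'
  rel_left : ∀ b c c' : Q.A, (c, b) ∈ Z → (c', b) ∈ Z → c = c'
  adm_left : ∀ b c c' : Q.A, Q.t c = Q.h b → Q.t c' = Q.h b →
    (c, b) ∉ Z → (c', b) ∉ Z → c = c'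

/-- A vertex is relational if some relation `ba ∈ Z` passes through it,
i.e. `t b = v = h a`. -/
def Relational (Q : Quiv) (Z : Set (Q.A × Q.A)) (v : Q.V) : Prop :=
  ∃ b a : Q.A, (b, a) ∈ Z ∧ Q.t b = v ∧ Q.h a = v

/-- The levee of `(Q,Z)` at a relational vertex `v`, relative to a chosen relation
`(b,a) ∈ Z` through `v`.  The vertex `v` is replaced by two new vertices
`v(♯) = Sum.inr true` and `v(♭) = Sum.inr false`; arrows are unchanged; an arrow `x`
with tail `v` gets new tail `v(♯)` iff `(x,a) ∈ Z`, and an arrow `y` with head `v`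
gets new head `v(♭)` iff `(b,y) ∈ Z`. -/
noncomputable def levee (Q : Quiv) (Z : Set (Q.A × Q.A)) (v : Q.V) (b a : Q.A) : Quiv where
  V := {u : Q.V // u ≠ v} ⊕ Bool
  A := Q.A
  h := fun x =>
    if hx : Q.h x = v then (if (b, x) ∈ Z then Sum.inr false else Sum.inr true)
    else Sum.inl ⟨Q.h x, hx⟩
  t := fun x =>
    if hx : Q.t x = v then (if (x, a) ∈ Z then Sum.inr true else Sum.inr false)
    else Sum.inl ⟨Q.t x, hx⟩

/-- The relation set of the levee: the relations of `Z` not passing through `v`. -/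
def leveeZ (Q : Quiv) (Z : Set (Q.A × Q.A)) (v : Q.V) : Set (Q.A × Q.A) :=
  {p | p ∈ Z ∧ Q.t p.1 ≠ v ∧ Q.h p.2 ≠ v}

/-- Paths in the levee: a path in `Q` all of whose consecutive pairs avoid `Z` gives a
path in `Q^v`; conversely every path in `Q^v` comes from a path in `Q` avoiding the
relations broken at `v` (pairs of `Z` passing through `v`). -/
lemma chain'_and {α : Type*} {R S : α → α → Prop} {p : List α}
    (hR : p.Chain' R) (hS : p.Chain' S) : p.Chain' (fun x y => R x y ∧ S x y) := by
  induction p with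
  | nil => exact List.isChain_nil
  | cons x t ih =>
    cases t with
    | nil => exact List.isChain_singleton _
    | cons y u =>
      simp only [List.Chain', List.isChain_cons_cons] at hR hS ⊢
      exact ⟨⟨hR.1, hS.1⟩, ih hR.2 hS.2⟩

theorem stmt19 (Q : Quiv) (Z : Set (Q.A × Q.A)) (lg : LocallyGentle Q Z)
    (v : Q.V) (b a : Q.A) (hba : (b, a) ∈ Z) (htb : Q.t b = v) (hha : Q.h a = v) :
    (∀ p : List Q.A, Q.IsPath p → p.Chain' (fun x y => (x, y) ∉ Z) →
      (levee Q Z v b a).IsPath p) ∧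
    (∀ p : List Q.A, (levee Q Z v b a).IsPath p →
      Q.IsPath p ∧ p.Chain' (fun x y => ¬((x, y) ∈ Z ∧ Q.t x = v))) := by
  have key : ∀ x y : Q.A,
      ((levee Q Z v b a).t x = (levee Q Z v b a).h y) ↔
      (Q.t x = Q.h y ∧ ¬((x, y) ∈ Z ∧ Q.t x = v)) := by
    intro x y
    show (if hx : Q.t x = v then _ else _ : {u : Q.V // u ≠ v} ⊕ Bool) = (if hy : Q.h y = v then _ else _ : {u : Q.V // u ≠ v} ⊕ Bool) ↔ _
    by_cases hx : Q.t x = v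
    · by_cases hy : Q.h y = v
      · rw [dif_pos hx, dif_pos hy]
        constructor
        · intro h
          refine ⟨hx.trans hy.symm, ?_⟩
          rintro ⟨hxy, -⟩
          by_cases hxa : (x, a) ∈ Z
          · have hya : y = a := lg.rel_right x y a hxy hxa
            have hby : (b, y) ∈ Z := hya ▸ hba
            rw [if_pos hxa, if_pos hby] at h
            exact absurd (Sum.inr_injective h) (by simp)
          · by_cases hby : (b, y) ∈ Z
            · have : x = b := lg.rel_left y x b hxy hby
              subst this
              exact hxa hba
            · rw [if_neg hxa, if_neg hby] at h
              exact absurd (Sum.inr_injective h) (by simp)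
        · rintro ⟨heq, hnot⟩
          have hxy : (x, y) ∉ Z := fun h => hnot ⟨h, hx⟩
          by_cases hxa : (x, a) ∈ Z
          · by_cases hby : (b, y) ∈ Z
            · have h1 : x = b := lg.rel_left a x b hxa hba
              have h2 : y = a := lg.rel_right b y a hby hba
              exact absurd (h1 ▸ h2 ▸ hxy) (fun h => h hba)
            · simp [hxa, hby]
          · by_cases hby : (b, y) ∈ Z
            · simp [hxa, hby]
            · have hay : a = y := lg.adm_right x a y (hx.trans hha.symm) (hx.trans hy.symm) hxa hxy
              exact absurd (hay ▸ hby) (fun h => h hba)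
      · rw [dif_pos hx, dif_neg hy]
        constructor
        · intro h
          by_cases hxa : (x, a) ∈ Z <;> simp [hxa] at h
        · rintro ⟨heq, -⟩
          exact absurd (heq ▸ hx) hy
    · by_cases hy : Q.h y = v
      · rw [dif_neg hx, dif_pos hy]
        constructor
        · intro h
          by_cases hby : (b, y) ∈ Z <;> simp [hby] at h
        · rintro ⟨heq, -⟩
          exact absurd (heq.symm ▸ hy) hx
      · rw [dif_neg hx, dif_neg hy]
        constructor
        · intro h
          have h2 := Sum.inl_injective h
          exact ⟨congrArg Subtype.val h2, fun hc => hx hc.2⟩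
        · rintro ⟨heq, -⟩
          exact congrArg Sum.inl (Subtype.ext heq)
  constructor
  · intro p hp hz
    have := chain'_and hp hz
    exact this.imp (fun x y ⟨h1, h2⟩ => (key x y).mpr ⟨h1, fun hc => h2 hc.1⟩)
  · intro p hp
    have h := hp.imp (fun x y h => (key x y).mp h)
    exact ⟨h.imp (fun x y hh => hh.1), h.imp (fun x y hh => hh.2)⟩
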